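/- Fix s > 0 and c₄ > 0. For n ∈ ℕ let Π(n) = (4s+1)·n·(n−2) + (2s+1)² and r*(n) = ⌈n/2 − (2s+1+√Π(n))/(8s+2)⌉. Then lim_{n→∞} [ c₄ · (n−r*(n)−1)^{n−r*(n)−1} / ( (r*(n)−1)^{r*(n)−1} · (n−2r*(n))^{n−2r*(n)} ) · s^{r*(n)} ]^{1/n} = 1/2 + √(s + 1/4). -/

import Mathlib

/-- `r*(n) = ⌈n/2 − (2s+1+√Π)/(8s+2)⌉` where `Π = (4s+1)n(n−2) + (2s+1)²`. -/
noncomputable def rstar (s : ℝ) (n : ℕ) : ℕ :=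
  (⌈(n : ℝ) / 2 -
      (2 * s + 1 + Real.sqrt ((4 * s + 1) * n * (n - 2) + (2 * s + 1) ^ 2)) /
        (8 * s + 2)⌉).toNat

open Filter Real

namespace Stmt7aux

noncomputable def q (s : ℝ) : ℝ := Real.sqrt (4 * s + 1)
noncomputable def rho (s : ℝ) : ℝ := 1 / 2 - 1 / (2 * q s)
noncomputable def g (s : ℝ) (n : ℕ) : ℝ :=
  (n : ℝ) / 2 -
      (2 * s + 1 + Real.sqrt ((4 * s + 1) * n * (n - 2) + (2 * s + 1) ^ 2)) /
        (8 * s + 2)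

lemma hq1 {s : ℝ} (hs : 0 < s) : 1 < q s := by
  rw [q]
  nlinarith [Real.sq_sqrt (by linarith : (0:ℝ) ≤ 4*s+1), Real.sqrt_nonneg (4*s+1)]

lemma hq2 {s : ℝ} (hs : 0 < s) : q s ^ 2 = 4 * s + 1 := Real.sq_sqrt (by linarith)

lemma hrho0 {s : ℝ} (hs : 0 < s) : 0 < rho s := by
  have h1 := hq1 hs
  have : 1 / (2 * q s) < 1 / 2 := by
    apply div_lt_div_of_pos_left <;> linarith
  rw [rho]; linarith

lemma hrho2 {s : ℝ} (hs : 0 < s) : 1 - 2 * rho s = 1 / q s := by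
  have h1 := hq1 hs
  rw [rho]; field_simp; ring

lemma tendsto_g_div {s : ℝ} (hs : 0 < s) :
    Tendsto (fun n : ℕ => g s n / n) atTop (nhds (rho s)) := by
  have h1 := hq1 hs
  have hq0 : 0 < q s := by linarith
  -- Π n / n² → 4s+1
  have hPi : Tendsto (fun n : ℕ =>
      ((4 * s + 1) * n * (n - 2 : ℝ) + (2 * s + 1) ^ 2) / (n:ℝ) ^ 2) atTop
      (nhds (4 * s + 1)) := by
    have e1 : Tendsto (fun n : ℕ => (2 : ℝ) / n) atTop (nhds 0) :=
      tendsto_const_div_atTop_nhds_zero_nat 2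
    have e2 : Tendsto (fun n : ℕ => ((2*s+1) : ℝ) / n * ((2*s+1) / n)) atTop (nhds 0) := by
      simpa using (tendsto_const_div_atTop_nhds_zero_nat (2*s+1)).mul
        (tendsto_const_div_atTop_nhds_zero_nat (2*s+1))
    have : Tendsto (fun n : ℕ => (4*s+1) * (1 - 2/(n:ℝ)) + ((2*s+1)/n * ((2*s+1)/n)))
        atTop (nhds ((4*s+1) * (1 - 0) + 0)) := by
      exact (((tendsto_const_nhds).mul ((tendsto_const_nhds).sub e1)).add e2)
    simp only [sub_zero, mul_one, add_zero] at this
    apply this.congr'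
    filter_upwards [eventually_gt_atTop 0] with n hn
    have hn' : (n:ℝ) ≠ 0 := Nat.cast_ne_zero.mpr hn.ne'
    field_simp
  have hsq : Tendsto (fun n : ℕ =>
      Real.sqrt (((4 * s + 1) * n * ((n:ℝ) - 2) + (2 * s + 1) ^ 2) / (n:ℝ) ^ 2)) atTop
      (nhds (q s)) := (Real.continuous_sqrt.continuousAt.tendsto).comp hPi
  have hmain : Tendsto (fun n : ℕ =>
      1/2 - (2*s+1)/((8*s+2) * n) -
        Real.sqrt (((4 * s + 1) * n * ((n:ℝ) - 2) + (2 * s + 1) ^ 2) / (n:ℝ) ^ 2) / (8*s+2))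
      atTop (nhds (rho s)) := by
    have hc : Tendsto (fun n : ℕ => (2*s+1)/((8*s+2) * (n:ℝ))) atTop (nhds 0) := by
      have := (tendsto_const_div_atTop_nhds_zero_nat ((2*s+1)/(8*s+2)))
      apply this.congr
      intro n
      field_simp
    have := ((tendsto_const_nhds (x := (1:ℝ)/2)).sub hc).sub (hsq.div_const (8*s+2))
    rw [sub_zero] at this
    convert this using 2
    rw [rho]
    have h2 : q s / (8*s+2) = 1 / (2 * q s) := by
      have hq2' := hq2 hs
      field_simp
      nlinarith [hq2']
    linarith
  apply hmain.congr'
  filter_upwards [eventually_ge_atTop 2] with n hn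
  have hn0 : (0:ℝ) < n := by positivity
  have hn2 : (2:ℝ) ≤ n := by exact_mod_cast hn
  have hPinn : (0:ℝ) ≤ (4 * s + 1) * n * ((n:ℝ) - 2) + (2 * s + 1) ^ 2 := by
    nlinarith [mul_nonneg (mul_nonneg (by linarith : (0:ℝ) ≤ 4*s+1) hn0.le) (by linarith : (0:ℝ) ≤ (n:ℝ)-2)]
  have hsq' : Real.sqrt (((4 * s + 1) * n * ((n:ℝ) - 2) + (2 * s + 1) ^ 2) / (n:ℝ) ^ 2)
      = Real.sqrt ((4 * s + 1) * n * ((n:ℝ) - 2) + (2 * s + 1) ^ 2) / n := by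
    rw [Real.sqrt_div hPinn, Real.sqrt_sq hn0.le]
  rw [hsq', g]
  field_simp
  ring

end Stmt7aux

namespace Stmt7aux

lemma g_le_rstar (s : ℝ) (n : ℕ) : g s n ≤ (rstar s n : ℝ) := by
  have h1 : g s n ≤ (⌈g s n⌉ : ℝ) := Int.le_ceil _
  have h2 : (⌈g s n⌉ : ℤ) ≤ (⌈g s n⌉.toNat : ℤ) := Int.self_le_toNat _
  have h2' : ((⌈g s n⌉ : ℤ) : ℝ) ≤ ((⌈g s n⌉.toNat : ℤ) : ℝ) := by exact_mod_cast h2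
  calc g s n ≤ ((⌈g s n⌉ : ℤ) : ℝ) := h1
    _ ≤ ((⌈g s n⌉.toNat : ℤ) : ℝ) := h2'
    _ = (rstar s n : ℝ) := by rw [rstar]; push_cast; rfl

lemma rstar_le_g (s : ℝ) (n : ℕ) (hg : 0 ≤ g s n) : (rstar s n : ℝ) ≤ g s n + 1 := by
  have h0 : (0:ℤ) ≤ ⌈g s n⌉ := Int.ceil_nonneg hg
  have h1 : ((⌈g s n⌉.toNat : ℤ) : ℝ) = ((⌈g s n⌉ : ℤ) : ℝ) := by
    exact_mod_cast Int.toNat_of_nonneg h0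
  have h2 : ((⌈g s n⌉ : ℤ) : ℝ) < g s n + 1 := Int.ceil_lt_add_one _
  have : (rstar s n : ℝ) = ((⌈g s n⌉.toNat : ℤ) : ℝ) := by rw [rstar]; push_cast; rfl
  rw [this, h1]; linarith

lemma tendsto_g_atTop {s : ℝ} (hs : 0 < s) : Tendsto (fun n : ℕ => g s n) atTop atTop := by
  have := (tendsto_g_div hs).pos_mul_atTop (hrho0 hs) tendsto_natCast_atTop_atTop
  apply this.congr'
  filter_upwards [eventually_gt_atTop 0] with n hn
  have : (n:ℝ) ≠ 0 := Nat.cast_ne_zero.mpr hn.ne'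
  field_simp

lemma ev_g_nonneg {s : ℝ} (hs : 0 < s) : ∀ᶠ n : ℕ in atTop, 0 ≤ g s n :=
  (tendsto_g_atTop hs).eventually_ge_atTop 0

lemma tendsto_r_div {s : ℝ} (hs : 0 < s) :
    Tendsto (fun n : ℕ => (rstar s n : ℝ) / n) atTop (nhds (rho s)) := by
  have hlo := tendsto_g_div hs
  have hhi : Tendsto (fun n : ℕ => g s n / n + 1 / n) atTop (nhds (rho s)) := by
    have := hlo.add (tendsto_const_div_atTop_nhds_zero_nat 1)
    simpa using this
  apply tendsto_of_tendsto_of_tendsto_of_le_of_le' hlo hhi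
  · filter_upwards [eventually_gt_atTop 0] with n hn
    gcongr
    exact g_le_rstar s n
  · filter_upwards [ev_g_nonneg hs, eventually_gt_atTop 0] with n hg hn
    have := rstar_le_g s n hg
    have hn0 : (0:ℝ) < n := by positivity
    rw [← add_div]
    gcongr

lemma tendsto_r_atTop {s : ℝ} (hs : 0 < s) :
    Tendsto (fun n : ℕ => (rstar s n : ℝ)) atTop atTop :=
  tendsto_atTop_mono (fun n => g_le_rstar s n) (tendsto_g_atTop hs)

lemma tendsto_c_atTop {s : ℝ} (hs : 0 < s) :
    Tendsto (fun n : ℕ => (n : ℝ) - 2 * rstar s n) atTop atTop := by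
  have h1 := hq1 hs
  have hq0 : 0 < q s := by linarith
  have hpos : 0 < 1 - 2 * rho s := by rw [hrho2 hs]; positivity
  have hlim : Tendsto (fun n : ℕ => 1 - 2 * ((rstar s n : ℝ)/n)) atTop (nhds (1 - 2*rho s)) := by
    exact tendsto_const_nhds.sub ((tendsto_r_div hs).const_mul 2)
  have := hlim.pos_mul_atTop hpos tendsto_natCast_atTop_atTop
  apply this.congr'
  filter_upwards [eventually_gt_atTop 0] with n hn
  have : (n:ℝ) ≠ 0 := Nat.cast_ne_zero.mpr hn.ne'
  field_simp

lemma tendsto_a_atTop {s : ℝ} (hs : 0 < s) :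
    Tendsto (fun n : ℕ => (n : ℝ) - rstar s n - 1) atTop atTop := by
  have hr1 : Tendsto (fun n : ℕ => (rstar s n : ℝ) + (-1)) atTop atTop :=
    tendsto_atTop_add_const_right _ (-1) (tendsto_r_atTop hs)
  have := Filter.Tendsto.atTop_add_atTop (tendsto_c_atTop hs) hr1
  exact this.congr (fun n => by ring)

end Stmt7aux

namespace Stmt7aux

lemma tendsto_phi {u : ℕ → ℝ} {p : ℝ} (hp : 0 < p) (hu : Tendsto u atTop (nhds p)) :
    Tendsto (fun n => u n * Real.log (u n)) atTop (nhds (p * Real.log p)) :=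
  hu.mul ((Real.continuousAt_log hp.ne').tendsto.comp hu)

lemma tendsto_an {s : ℝ} (hs : 0 < s) :
    Tendsto (fun n : ℕ => ((n:ℝ) - rstar s n - 1)/n) atTop (nhds (1 - rho s)) := by
  have := ((tendsto_const_nhds (x := (1:ℝ))).sub (tendsto_r_div hs)).sub
    (tendsto_const_div_atTop_nhds_zero_nat 1)
  rw [sub_zero] at this
  apply this.congr'
  filter_upwards [eventually_gt_atTop 0] with n hn
  have : (n:ℝ) ≠ 0 := Nat.cast_ne_zero.mpr hn.ne'
  field_simp

lemma tendsto_bn {s : ℝ} (hs : 0 < s) :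
    Tendsto (fun n : ℕ => ((rstar s n : ℝ) - 1)/n) atTop (nhds (rho s)) := by
  have := (tendsto_r_div hs).sub (tendsto_const_div_atTop_nhds_zero_nat 1)
  rw [sub_zero] at this
  apply this.congr'
  filter_upwards [eventually_gt_atTop 0] with n hn
  have : (n:ℝ) ≠ 0 := Nat.cast_ne_zero.mpr hn.ne'
  field_simp

lemma tendsto_cn {s : ℝ} (hs : 0 < s) :
    Tendsto (fun n : ℕ => ((n:ℝ) - 2 * rstar s n)/n) atTop (nhds (1 - 2 * rho s)) := by
  have := (tendsto_const_nhds (x := (1:ℝ))).sub ((tendsto_r_div hs).const_mul 2)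
  apply this.congr'
  filter_upwards [eventually_gt_atTop 0] with n hn
  have : (n:ℝ) ≠ 0 := Nat.cast_ne_zero.mpr hn.ne'
  field_simp

/-- the limit of `(1/n) log E n` -/
noncomputable def flim (s c₄ : ℝ) : ℝ :=
  (1 - rho s) * Real.log (1 - rho s) - rho s * Real.log (rho s)
    - (1 - 2 * rho s) * Real.log (1 - 2 * rho s) + rho s * Real.log s

lemma tendsto_G {s : ℝ} (c₄ : ℝ) (hs : 0 < s) :
    Tendsto (fun n : ℕ =>
      Real.log c₄ * (1/n)
      + (((n:ℝ) - rstar s n - 1)/n) * Real.log (((n:ℝ) - rstar s n - 1)/n)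
      - (((rstar s n : ℝ) - 1)/n) * Real.log (((rstar s n : ℝ) - 1)/n)
      - (((n:ℝ) - 2 * rstar s n)/n) * Real.log (((n:ℝ) - 2 * rstar s n)/n)
      + ((rstar s n : ℝ)/n) * Real.log s) atTop (nhds (flim s c₄)) := by
  have h1 := hq1 hs
  have hρ0 := hrho0 hs
  have hρ1 : 0 < 1 - rho s := by
    have h2 : 0 < 1 - 2 * rho s := by rw [hrho2 hs]; positivity
    linarith
  have hρ2 : 0 < 1 - 2 * rho s := by rw [hrho2 hs]; positivity
  have t0 : Tendsto (fun n : ℕ => Real.log c₄ * (1/(n:ℝ))) atTop (nhds 0) := by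
    have := (tendsto_const_div_atTop_nhds_zero_nat 1).const_mul (Real.log c₄)
    simpa using this
  have t1 := tendsto_phi hρ1 (tendsto_an hs)
  have t2 := tendsto_phi hρ0 (tendsto_bn hs)
  have t3 := tendsto_phi hρ2 (tendsto_cn hs)
  have t4 := (tendsto_r_div hs).mul_const (Real.log s)
  have := ((((t0.add t1).sub t2).sub t3).add t4)
  rw [flim]
  convert this using 2 <;> ring

lemma exp_flim {s : ℝ} (c₄ : ℝ) (hs : 0 < s) : flim s c₄ = Real.log ((1 + q s)/2) := by
  have h1 := hq1 hs
  have hq2' := hq2 hs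
  have hq0 : (0:ℝ) < q s := by linarith
  have hqm : (0:ℝ) < q s - 1 := by linarith
  have hqp : (0:ℝ) < q s + 1 := by linarith
  have hrho : rho s = (q s - 1)/(2 * q s) := by rw [rho]; field_simp
  have h1m : 1 - rho s = (q s + 1)/(2 * q s) := by rw [hrho]; field_simp; ring
  have h2m : 1 - 2 * rho s = 1 / q s := hrho2 hs
  have hs' : s = (q s ^ 2 - 1)/4 := by rw [hq2']; ring
  have Ls : Real.log s = Real.log ((q s ^ 2 - 1)/4) := by rw [← hs']
  rw [flim, h1m, h2m, hrho, Ls]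
  have L1 : Real.log ((q s + 1)/(2 * q s)) = Real.log (q s + 1) - (Real.log 2 + Real.log (q s)) := by
    rw [Real.log_div hqp.ne' (by positivity), Real.log_mul (by norm_num) hq0.ne']
  have L2 : Real.log ((q s - 1)/(2 * q s)) = Real.log (q s - 1) - (Real.log 2 + Real.log (q s)) := by
    rw [Real.log_div hqm.ne' (by positivity), Real.log_mul (by norm_num) hq0.ne']
  have L3 : Real.log (1 / q s) = -Real.log (q s) := by rw [one_div, Real.log_inv]
  have L4 : Real.log ((q s ^ 2 - 1)/4)
      = Real.log (q s - 1) + Real.log (q s + 1) - 2 * Real.log 2 := by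
    rw [show q s ^ 2 - 1 = (q s - 1) * (q s + 1) by ring, show (4:ℝ) = 2^2 by norm_num,
      Real.log_div (by positivity) (by positivity), Real.log_mul hqm.ne' hqp.ne',
      Real.log_pow]
    push_cast; ring
  have L5 : Real.log ((1 + q s)/2) = Real.log (q s + 1) - Real.log 2 := by
    rw [show (1 + q s) = q s + 1 by ring, Real.log_div hqp.ne' (by norm_num)]
  rw [L1, L2, L3, L4, L5]
  field_simp
  ring

lemma sqrt_eq {s : ℝ} (hs : 0 < s) : Real.sqrt (s + 1/4) = q s / 2 := by
  have hq0 : (0:ℝ) < q s := by have := hq1 hs; linarith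
  rw [show s + 1/4 = (q s / 2)^2 by rw [div_pow, hq2 hs]; ring]
  exact Real.sqrt_sq (by positivity)

end Stmt7aux


open Stmt7aux

/-- The Stirling-type limit:
`[c₄ (n−r*−1)^{n−r*−1} / ((r*−1)^{r*−1} (n−2r*)^{n−2r*}) · s^{r*}]^{1/n} → 1/2 + √(s+1/4)`. -/
theorem stmt_7 (s c₄ : ℝ) (hs : 0 < s) (hc₄ : 0 < c₄) :
    Filter.Tendsto
      (fun n : ℕ =>
        (c₄ * ((n : ℝ) - rstar s n - 1) ^ (n - rstar s n - 1) /
            (((rstar s n : ℝ) - 1) ^ (rstar s n - 1) *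
              ((n : ℝ) - 2 * rstar s n) ^ (n - 2 * rstar s n)) *
          s ^ (rstar s n)) ^ ((1 : ℝ) / n))
      Filter.atTop (nhds (1 / 2 + Real.sqrt (s + 1 / 4))) := by

  have h1 := hq1 hs
  have hq0 : (0:ℝ) < q s := by linarith
  have hval : (1:ℝ)/2 + Real.sqrt (s + 1/4) = Real.exp (flim s c₄) := by
    rw [exp_flim c₄ hs, Real.exp_log (by positivity), sqrt_eq hs]; ring
  rw [hval]
  have hcomp := (Real.continuous_exp.continuousAt.tendsto).comp (tendsto_G c₄ hs)
  apply Filter.Tendsto.congr' _ hcomp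
  filter_upwards [eventually_gt_atTop 0,
    (tendsto_r_atTop hs).eventually_ge_atTop 2,
    (tendsto_a_atTop hs).eventually_ge_atTop 1,
    (tendsto_c_atTop hs).eventually_ge_atTop 1] with n hn hr2 ha1 hc1
  have hn0 : (0:ℝ) < n := by positivity
  have hn0' : (n:ℝ) ≠ 0 := hn0.ne'
  have ha : (0:ℝ) < (n:ℝ) - rstar s n - 1 := by linarith
  have hb : (0:ℝ) < (rstar s n : ℝ) - 1 := by linarith
  have hc : (0:ℝ) < (n:ℝ) - 2 * rstar s n := by linarith
  have hrn : rstar s n + 2 ≤ n := by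
    have : (rstar s n : ℝ) + 2 ≤ n := by linarith
    exact_mod_cast this
  have hrn2 : 2 * rstar s n + 1 ≤ n := by
    have : 2 * (rstar s n : ℝ) + 1 ≤ n := by linarith
    exact_mod_cast this
  have hr2' : 2 ≤ rstar s n := by exact_mod_cast hr2
  have hA : ((n - rstar s n - 1 : ℕ) : ℝ) = (n:ℝ) - rstar s n - 1 := by
    rw [Nat.cast_sub (by omega), Nat.cast_sub (by omega)]; push_cast; ring
  have hB : ((rstar s n - 1 : ℕ) : ℝ) = (rstar s n : ℝ) - 1 := by
    rw [Nat.cast_sub (by omega)]; push_cast; ring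
  have hC : ((n - 2 * rstar s n : ℕ) : ℝ) = (n:ℝ) - 2 * rstar s n := by
    rw [Nat.cast_sub (by omega)]; push_cast; ring
  have hEa : (0:ℝ) < ((n:ℝ) - rstar s n - 1) ^ (n - rstar s n - 1) := pow_pos ha _
  have hEb : (0:ℝ) < ((rstar s n : ℝ) - 1) ^ (rstar s n - 1) := pow_pos hb _
  have hEc : (0:ℝ) < ((n:ℝ) - 2 * rstar s n) ^ (n - 2 * rstar s n) := pow_pos hc _
  have hEs : (0:ℝ) < s ^ (rstar s n) := pow_pos hs _
  have hE : (0:ℝ) < c₄ * ((n:ℝ) - rstar s n - 1) ^ (n - rstar s n - 1) /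
      (((rstar s n : ℝ) - 1) ^ (rstar s n - 1) *
        ((n:ℝ) - 2 * rstar s n) ^ (n - 2 * rstar s n)) * s ^ (rstar s n) :=
    mul_pos (div_pos (mul_pos hc₄ hEa) (mul_pos hEb hEc)) hEs
  simp only [Function.comp_apply]
  rw [Real.rpow_def_of_pos hE]
  congr 1
  rw [Real.log_mul (div_pos (mul_pos hc₄ hEa) (mul_pos hEb hEc)).ne' hEs.ne',
    Real.log_div (mul_pos hc₄ hEa).ne' (mul_pos hEb hEc).ne',
    Real.log_mul hc₄.ne' hEa.ne', Real.log_mul hEb.ne' hEc.ne',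
    Real.log_pow, Real.log_pow, Real.log_pow, Real.log_pow]
  rw [hA, hB, hC]
  rw [Real.log_div ha.ne' hn0', Real.log_div hb.ne' hn0', Real.log_div hc.ne' hn0']
  ring
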